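/- Any two distinct slices of a Lexicographic Breadth-First Search of a graph are either disjoint or one is strictly contained in the other (i.e., slices form a laminar family). -/

import Mathlib

/-- The LBFS label of vertex `v` just before step `t`: for each earlier step `i < t`
(in increasing order of `i`) at which a neighbour of `v` was explored, the value `n - i`
is appended. -/
def lbfsLabel {V : Type*} (G : SimpleGraph V) [DecidableRel G.Adj] (σ : ℕ → V)
    (n t : ℕ) (v : V) : List ℕ :=
  ((List.range t).filter (fun i => decide (G.Adj (σ i) v))).map (fun i => n - i)

/-- `σ` (restricted to `[0,n)`) is a Lexicographic Breadth-First Search ordering of `G`: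
it enumerates all vertices, and at each step the chosen vertex has lexicographically
largest label among the unexplored vertices. -/
def IsLBFS {V : Type*} (G : SimpleGraph V) [DecidableRel G.Adj] (n : ℕ) (σ : ℕ → V) : Prop :=
  Set.BijOn σ (Set.Iio n) Set.univ ∧
    ∀ t < n, ∀ v : V, (∀ i < t, σ i ≠ v) →
      ¬ List.Lex (· < ·) (lbfsLabel G σ n t (σ t)) (lbfsLabel G σ n t v)

/-- The slice defined at step `t`: the unexplored vertices sharing the (lexicographically
largest) label of the chosen vertex `σ t` just before step `t`. -/
def sliceAt {V : Type*} (G : SimpleGraph V) [DecidableRel G.Adj] (σ : ℕ → V) (n t : ℕ) :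
    Set V :=
  {v | (∀ i < t, σ i ≠ v) ∧ lbfsLabel G σ n t v = lbfsLabel G σ n t (σ t)}

/-- `S` is a slice of the LBFS. -/
def IsSlice {V : Type*} (G : SimpleGraph V) [DecidableRel G.Adj] (σ : ℕ → V) (n : ℕ)
    (S : Set V) : Prop :=
  ∃ t < n, S = sliceAt G σ n t

/-- The slice defined at step `u` is a maximal (proper) subslice of the slice at step `t`. -/
def IsMaxSubsliceAt {V : Type*} (G : SimpleGraph V) [DecidableRel G.Adj] (σ : ℕ → V)
    (n t u : ℕ) : Prop :=
  u < n ∧ sliceAt G σ n u ⊂ sliceAt G σ n t ∧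
    ∀ w < n, ¬(sliceAt G σ n u ⊂ sliceAt G σ n w ∧ sliceAt G σ n w ⊂ sliceAt G σ n t)

/-- `u 1, …, u k` are the steps defining the maximal subslices `S_1, …, S_k` of the slice
at step `t`, listed in the order the LBFS defines them (the initial vertex `σ t`, as a
singleton, being by convention the zeroth maximal subslice). -/
def MaxSubsliceEnum {V : Type*} (G : SimpleGraph V) [DecidableRel G.Adj] (σ : ℕ → V)
    (n t k : ℕ) (u : ℕ → ℕ) : Prop :=
  (∀ i, 1 ≤ i → i ≤ k → IsMaxSubsliceAt G σ n t (u i)) ∧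
  (∀ i j, 1 ≤ i → i < j → j ≤ k → u i < u j) ∧
  (∀ i, 1 ≤ i → i ≤ k → t < u i) ∧
  (∀ w, w < n → IsMaxSubsliceAt G σ n t w →
    ∃ i, 1 ≤ i ∧ i ≤ k ∧ sliceAt G σ n w = sliceAt G σ n (u i))

/-- The edge `ab` is active for the slice at step `t`: both endpoints lie in that slice
but in different maximal subslices of it (i.e. no maximal subslice contains both). -/
def activeFor {V : Type*} (G : SimpleGraph V) [DecidableRel G.Adj] (σ : ℕ → V)
    (n t : ℕ) (a b : V) : Prop :=
  G.Adj a b ∧ a ∈ sliceAt G σ n t ∧ b ∈ sliceAt G σ n t ∧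
    ∀ w, IsMaxSubsliceAt G σ n t w → ¬(a ∈ sliceAt G σ n w ∧ b ∈ sliceAt G σ n w)

lemma prefix_eq_of_append_eq : ∀ (p₁ : List ℕ) (p₂ s₁ s₂ : List ℕ) (c : ℕ),
    p₁ ++ s₁ = p₂ ++ s₂ → (∀ x ∈ p₁, c < x) → (∀ x ∈ p₂, c < x) →
    (∀ x ∈ s₁, x ≤ c) → (∀ x ∈ s₂, x ≤ c) → p₁ = p₂ := by
  intro p₁
  induction p₁ with
  | nil =>
    intro p₂ s₁ s₂ c h h1 h2 h3 h4
    cases p₂ with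
    | nil => rfl
    | cons a q =>
      exfalso
      simp only [List.nil_append, List.cons_append] at h
      have ha : a ∈ s₁ := h ▸ List.mem_cons_self (a := a) (l := _)
      exact absurd (h3 a ha) (not_le.mpr (h2 a (List.mem_cons_self (a := a) (l := _))))
  | cons a q ih =>
    intro p₂ s₁ s₂ c h h1 h2 h3 h4
    cases p₂ with
    | nil =>
      exfalso
      simp only [List.cons_append, List.nil_append] at h
      have ha : a ∈ s₂ := h ▸ List.mem_cons_self (a := a) (l := _)
      exact absurd (h4 a ha) (not_le.mpr (h1 a (List.mem_cons_self (a := a) (l := _))))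
    | cons b r =>
      simp only [List.cons_append, List.cons.injEq] at h
      obtain ⟨rfl, h⟩ := h
      rw [ih r s₁ s₂ c h (fun x hx => h1 x (List.mem_cons_of_mem _ hx))
        (fun x hx => h2 x (List.mem_cons_of_mem _ hx)) h3 h4]

lemma range_split (t u : ℕ) (h : t ≤ u) :
    List.range u = List.range t ++ List.range' t (u - t) := by
  rw [List.range_eq_range', List.range_eq_range']
  have := List.range'_append (s := 0) (m := t) (n := u - t) (step := 1)
  simp only [Nat.zero_add, Nat.one_mul] at this
  rw [this]
  congr 1
  omega

lemma lbfsLabel_split {V : Type*} (G : SimpleGraph V) [DecidableRel G.Adj] (σ : ℕ → V)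
    (n : ℕ) {t u : ℕ} (h : t ≤ u) (v : V) :
    lbfsLabel G σ n u v = lbfsLabel G σ n t v ++
      (((List.range' t (u - t)).filter (fun i => decide (G.Adj (σ i) v))).map
        (fun i => n - i)) := by
  unfold lbfsLabel
  rw [range_split t u h, List.filter_append, List.map_append]

lemma slice_subset_of_not_disjoint {V : Type*} (G : SimpleGraph V) [DecidableRel G.Adj]
    (σ : ℕ → V) {n t u : ℕ} (htu : t < u) (hun : u ≤ n)
    (hinter : ¬ Disjoint (sliceAt G σ n t) (sliceAt G σ n u)) :
    sliceAt G σ n u ⊆ sliceAt G σ n t := by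
  rw [Set.not_disjoint_iff] at hinter
  obtain ⟨v, hvt, hvu⟩ := hinter
  intro w hwu
  refine ⟨fun i hi => hwu.1 i (hi.trans htu), ?_⟩
  rw [← hvt.2]
  have h1 : lbfsLabel G σ n u w = lbfsLabel G σ n u v := by rw [hvu.2, hwu.2]
  rw [lbfsLabel_split G σ n htu.le w, lbfsLabel_split G σ n htu.le v] at h1
  refine prefix_eq_of_append_eq _ _ _ _ (n - t) h1 ?_ ?_ ?_ ?_ <;>
  · intro x hx
    simp only [lbfsLabel, List.mem_map, List.mem_filter, List.mem_range,
      List.mem_range'_1] at hx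
    obtain ⟨i, ⟨hi, -⟩, rfl⟩ := hx
    omega

/-- slices of an LBFS form a laminar family. -/
theorem slices_laminar {V : Type*} (G : SimpleGraph V) [DecidableRel G.Adj]
    (n : ℕ) (σ : ℕ → V) (hL : IsLBFS G n σ) (S S' : Set V)
    (hS : IsSlice G σ n S) (hS' : IsSlice G σ n S') (hne : S ≠ S') :
    Disjoint S S' ∨ S ⊂ S' ∨ S' ⊂ S := by
  obtain ⟨t, ht, rfl⟩ := hS
  obtain ⟨u, hu, rfl⟩ := hS'
  rcases lt_trichotomy t u with h | h | h
  · by_cases hd : Disjoint (sliceAt G σ n t) (sliceAt G σ n u)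
    · exact Or.inl hd
    · have hsub := slice_subset_of_not_disjoint G σ h hu.le hd
      rcases hsub.ssubset_or_eq with hss | heq
      · exact Or.inr (Or.inr hss)
      · exact absurd heq.symm hne
  · exact absurd (by rw [h]) hne
  · by_cases hd : Disjoint (sliceAt G σ n u) (sliceAt G σ n t)
    · exact Or.inl hd.symm
    · have hsub := slice_subset_of_not_disjoint G σ h ht.le hd
      rcases hsub.ssubset_or_eq with hss | heq
      · exact Or.inr (Or.inl hss)
      · exact absurd heq hne
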